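/- For every f ∈ X, sup_{η∈Q} η(f) = inf{c ∈ ℝ : ∃ h ∈ H_Q such that c•e + h ≥ f}. -/

import Mathlib

set_option linter.unusedSectionVars false

open NormedSpace

/-- Positivity in the dual of an ordered normed space. -/
def dualNonneg (X : Type*) [NormedAddCommGroup X] [NormedSpace ℝ X] [Lattice X]
    (η : StrongDual ℝ X) : Prop :=
  ∀ f : X, 0 ≤ f → 0 ≤ η f

open NormedSpace

section aux
variable {X : Type*} [NormedAddCommGroup X] [Lattice X] [IsOrderedAddMonoid X] [HasSolidNorm X] [NormedSpace ℝ X]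

lemma aux_inf_add_le {a b c : X} (ha : 0 ≤ a) (hb : 0 ≤ b) (hc : 0 ≤ c) :
    (a + c) ⊓ b ≤ a ⊓ b + c ⊓ b := by
  have h1 : a ⊓ b + c ⊓ b = ((a + c) ⊓ (b + c)) ⊓ ((a + b) ⊓ (b + b)) := by
    rw [add_inf c b (a ⊓ b), inf_add a b c, inf_add a b b]
  rw [h1]
  refine le_inf (le_inf inf_le_left ?_) (le_inf ?_ ?_)
  · exact inf_le_right.trans (le_add_of_nonneg_right hc)
  · exact inf_le_right.trans (le_add_of_nonneg_left ha)
  · exact inf_le_right.trans (le_add_of_nonneg_right hb)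

lemma aux_disjoint_nsmul {a b : X} (ha : 0 ≤ a) (hb : 0 ≤ b) (hab : a ⊓ b = 0) :
    ∀ n : ℕ, (n • a) ⊓ b = 0 := by
  intro n
  induction n with
  | zero => simpa using inf_eq_left.2 hb
  | succ n ih =>
    refine le_antisymm ?_ (le_inf (nsmul_nonneg ha _) hb)
    calc ((n + 1) • a) ⊓ b = (n • a + a) ⊓ b := by rw [succ_nsmul]
      _ ≤ (n • a) ⊓ b + a ⊓ b := aux_inf_add_le (nsmul_nonneg ha n) hb ha
      _ = 0 := by rw [ih, hab, add_zero]

lemma aux_semiclosed {x : X} {n : ℕ} (h : 0 ≤ (n + 1) • x) : 0 ≤ x := by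
  have hp : (0:X) ≤ x⁺ := posPart_nonneg x
  have hq : (0:X) ≤ x⁻ := negPart_nonneg x
  have h1 : ((n + 1) • x⁺) ⊓ x⁻ = 0 :=
    aux_disjoint_nsmul hp hq (posPart_inf_negPart_eq_zero x) (n + 1)
  have h2 : ((n + 1) • x⁻) ⊓ ((n + 1) • x⁺) = 0 :=
    aux_disjoint_nsmul hq (nsmul_nonneg hp (n + 1)) (by rw [inf_comm]; exact h1) (n + 1)
  have hdiff : (n + 1) • x = (n + 1) • x⁺ - (n + 1) • x⁻ := by
    rw [← nsmul_sub, posPart_sub_negPart]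
  have hle : (n + 1) • x⁻ ≤ (n + 1) • x⁺ := by
    rw [hdiff] at h; exact sub_nonneg.mp h
  have hq2 : x⁻ ≤ (n + 1) • x⁻ := by
    rw [succ_nsmul]
    exact le_add_of_nonneg_left (nsmul_nonneg hq n)
  have : x⁻ ≤ 0 := by
    calc x⁻ ≤ ((n + 1) • x⁻) ⊓ ((n + 1) • x⁺) := le_inf hq2 (hq2.trans hle)
      _ = 0 := h2
  rw [← negPart_eq_zero]
  exact le_antisymm this hq

lemma aux_smul_nonneg {c : ℝ} {x : X} (hc : 0 ≤ c) (hx : 0 ≤ x) : 0 ≤ c • x := by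
  have hratq : ∀ q : ℚ, 0 ≤ q → 0 ≤ (q : ℝ) • x := by
    intro q hq0
    have hden : q.den • ((q : ℝ) • x) = q.num.toNat • x := by
      rw [← Nat.cast_smul_eq_nsmul ℝ, ← Nat.cast_smul_eq_nsmul ℝ, smul_smul]
      congr 1
      have h1 : ((q.den : ℝ)) * (q : ℝ) = (q.num : ℝ) := by
        rw [mul_comm]
        exact_mod_cast Rat.mul_den_eq_num q
      rw [h1]
      norm_cast
      exact (Int.toNat_of_nonneg (Rat.num_nonneg.2 hq0)).symm
    have hpos : 0 ≤ q.den • ((q : ℝ) • x) := by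
      rw [hden]; exact nsmul_nonneg hx _
    obtain ⟨m, hm⟩ : ∃ m : ℕ, q.den = m + 1 :=
      ⟨q.den - 1, by have := q.den_pos; omega⟩
    rw [hm] at hpos
    exact aux_semiclosed hpos
  set A := {t : ℝ | 0 ≤ t • x} with hA
  have hAc : IsClosed A := by
    have : A = (fun t : ℝ => t • x) ⁻¹' Set.Ici 0 := rfl
    rw [this]
    exact isClosed_Ici.preimage (continuous_id.smul continuous_const)
  have : c ∈ closure A := by
    rw [Metric.mem_closure_iff]
    intro ε hε
    obtain ⟨q, hq1, hq2⟩ := exists_rat_btwn (lt_add_of_pos_right c hε)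
    refine ⟨(q : ℝ), hratq q ?_, ?_⟩
    · exact_mod_cast (hc.trans_lt hq1).le
    · rw [Real.dist_eq, abs_sub_lt_iff]; constructor <;> linarith
  rwa [hAc.closure_eq] at this

end aux
section aux2
variable {X : Type*} [NormedAddCommGroup X] [Lattice X] [IsOrderedAddMonoid X] [HasSolidNorm X] [NormedSpace ℝ X]
variable {e : X}

lemma aux_order_bound (he : 0 ≤ e)
    (hnorm : ∀ f : X, ‖f‖ = sInf {c : ℝ | -(c • e) ≤ f ∧ f ≤ c • e})
    {x : X} {c : ℝ} (h : ‖x‖ < c) : -(c • e) ≤ x ∧ x ≤ c • e := by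
  set T := {d : ℝ | -(d • e) ≤ x ∧ x ≤ d • e} with hT
  by_cases hex : ∃ d ∈ T, d < c
  · obtain ⟨d, hd, hdc⟩ := hex
    have hde : d • e ≤ c • e := by
      have h0 : 0 ≤ (c - d) • e := aux_smul_nonneg (by linarith) he
      have := add_le_add_right h0 (d • e)
      rwa [add_zero, ← add_smul, add_sub_cancel] at this
    exact ⟨le_trans (neg_le_neg hde) hd.1, hd.2.trans hde⟩
  · push_neg at hex
    rcases Set.eq_empty_or_nonempty T with hTe | hTne
    · have hx0 : ‖x‖ = 0 := by rw [hnorm x, ← hT, hTe, Real.sInf_empty]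
      have hc0 : 0 < c := by rw [hx0] at h; exact h
      have hx : x = 0 := norm_eq_zero.mp hx0
      have hce : 0 ≤ c • e := aux_smul_nonneg hc0.le he
      rw [hx]
      exact ⟨neg_nonpos.2 hce, hce⟩
    · have h1 : c ≤ sInf T := le_csInf hTne hex
      have h2 : ‖x‖ = sInf T := hnorm x
      linarith

lemma aux_mem_interior (he : 0 ≤ e)
    (hnorm : ∀ f : X, ‖f‖ = sInf {c : ℝ | -(c • e) ≤ f ∧ f ≤ c • e})
    {x : X} (hx : 0 ≤ x) {δ : ℝ} (hδ : 0 < δ) :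
    x + δ • e ∈ interior (Set.Ici (0 : X)) := by
  refine mem_interior.2 ⟨Metric.ball (x + δ • e) δ, ?_, Metric.isOpen_ball,
    Metric.mem_ball_self hδ⟩
  intro z hz
  have hz' : ‖z - (x + δ • e)‖ < δ := by rwa [Metric.mem_ball, dist_eq_norm] at hz
  have h2 := (aux_order_bound he hnorm hz').1
  have h3 := add_le_add_left h2 (x + δ • e)
  rw [sub_add_cancel] at h3
  have h4 : x ≤ z := by
    calc x = -(δ • e) + (x + δ • e) := by abel
      _ ≤ z := h3
  exact Set.mem_Ici.2 (hx.trans h4)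

end aux2
section aux3
variable {X : Type*} [NormedAddCommGroup X] [Lattice X] [IsOrderedAddMonoid X] [HasSolidNorm X] [NormedSpace ℝ X] [CompleteSpace X]

lemma aux_sep {e : X} (he : 0 ≤ e)
    (hnorm : ∀ f : X, ‖f‖ = sInf {c : ℝ | -(c • e) ≤ f ∧ f ≤ c • e})
    (H : Submodule ℝ X) (f : X) (c : ℝ) (hc : ¬ ∃ h ∈ H, f ≤ c • e + h) :
    ∃ η : StrongDual ℝ X, (∀ h ∈ H, η h = 0) ∧ (∀ x : X, 0 ≤ x → 0 ≤ η x) ∧ η e = 1 ∧ c ≤ η f := by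
  set K := Set.Ici (0 : X) with hK
  have hKconv : Convex ℝ K := by
    intro x hx y hy a b ha hb hab
    exact add_nonneg (aux_smul_nonneg ha hx) (aux_smul_nonneg hb hy)
  set t := (fun h : X => c • e - f + h) '' (H : Set X) with ht
  have htconv : Convex ℝ t := (H.convex).translate (c • e - f)
  have hdisj : Disjoint (interior K) t := by
    rw [Set.disjoint_left]
    rintro z hz ⟨h, hh, rfl⟩
    refine hc ⟨h, hh, ?_⟩
    have h0 : (0 : X) ≤ c • e - f + h := interior_subset hz
    have h1 : f ≤ c • e - f + h + f := by simpa using add_le_add_right h0 f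
    calc f ≤ c • e - f + h + f := h1
      _ = c • e + h := by abel
  obtain ⟨φ, u, hs_lt, ht_ge⟩ :=
    geometric_hahn_banach_open hKconv.interior isOpen_interior htconv hdisj
  have hφH : ∀ h ∈ H, φ h = 0 := by
    intro h hh
    by_contra hne
    have hmem : c • e - f + ((u - 1 - φ (c • e - f)) / φ h) • h ∈ t :=
      ⟨_, H.smul_mem _ hh, rfl⟩
    have h1 := ht_ge _ hmem
    rw [map_add, map_smul, smul_eq_mul, div_mul_cancel₀ _ hne] at h1
    linarith
  have hu_gt : ∀ x : X, 0 ≤ x → ∀ δ : ℝ, 0 < δ → φ x + δ * φ e < u := by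
    intro x hx δ hδ
    have := hs_lt _ (aux_mem_interior he hnorm hx hδ)
    rwa [map_add, map_smul, smul_eq_mul] at this
  have hφ_nonpos : ∀ x : X, 0 ≤ x → φ x ≤ 0 := by
    intro x hx
    by_contra hpos
    push_neg at hpos
    obtain ⟨n, hn⟩ := exists_nat_gt ((u - φ e) / φ x)
    have h1 := hu_gt (n • x) (nsmul_nonneg hx n) 1 one_pos
    rw [map_nsmul, nsmul_eq_mul, one_mul] at h1
    rw [div_lt_iff₀ hpos] at hn
    linarith
  have hu0 : 0 ≤ u := by
    by_contra hu
    push_neg at hu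
    have hφe : φ e ≤ 0 := hφ_nonpos e he
    rcases eq_or_lt_of_le hφe with heq | hlt
    · have := hu_gt 0 le_rfl 1 one_pos
      rw [map_zero, zero_add, one_mul, heq] at this
      linarith
    · have hδ : 0 < u / (2 * φ e) := div_pos_of_neg_of_neg hu (by linarith)
      have h5 := hu_gt 0 le_rfl _ hδ
      rw [map_zero, zero_add] at h5
      have hne : φ e ≠ 0 := ne_of_lt hlt
      have heq2 : u / (2 * φ e) * φ e = u / 2 := by
        field_simp
      rw [heq2] at h5
      linarith
  have hφe_neg : φ e < 0 := by
    rcases lt_or_eq_of_le (hφ_nonpos e he) with hlt | heq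
    · exact hlt
    · exfalso
      have hall : ∀ v : X, φ v = 0 := by
        have key : ∀ v : X, φ v ≤ 0 := by
          intro v
          have h1 : (0 : X) ≤ (‖v‖ + 1) • e + v := by
            have hb := (aux_order_bound he hnorm
              (show ‖v‖ < ‖v‖ + 1 by linarith)).1
            have := add_le_add_right hb ((‖v‖ + 1) • e)
            rwa [add_neg_cancel] at this
          have h2 := hφ_nonpos _ h1
          rw [map_add, map_smul, smul_eq_mul, heq, mul_zero, zero_add] at h2
          exact h2
        intro v
        have h1 := key v
        have h2 := key (-v)
        rw [map_neg] at h2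
        linarith
      have h1 := hu_gt 0 le_rfl 1 one_pos
      have h2 := ht_ge (c • e - f + 0) ⟨0, H.zero_mem, rfl⟩
      rw [map_zero, zero_add, one_mul, hall e] at h1
      rw [hall (c • e - f + 0)] at h2
      linarith
  set ψ : StrongDual ℝ X := -φ with hψ
  have hψe : 0 < ψ e := by
    rw [hψ, ContinuousLinearMap.neg_apply]; linarith
  refine ⟨(ψ e)⁻¹ • ψ, ?_, ?_, ?_, ?_⟩
  · intro h hh
    simp [hψ, ContinuousLinearMap.neg_apply, hφH h hh]
  · intro x hx
    rw [ContinuousLinearMap.smul_apply, smul_eq_mul]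
    have h1 : 0 ≤ ψ x := by
      rw [hψ, ContinuousLinearMap.neg_apply]
      linarith [hφ_nonpos x hx]
    exact mul_nonneg (inv_nonneg.2 hψe.le) h1
  · rw [ContinuousLinearMap.smul_apply, smul_eq_mul, inv_mul_cancel₀ (ne_of_gt hψe)]
  · have h2 := ht_ge (c • e - f + 0) ⟨0, H.zero_mem, rfl⟩
    rw [add_zero, map_sub, map_smul, smul_eq_mul] at h2
    have h3 : c * ψ e ≤ ψ f := by
      rw [hψ, ContinuousLinearMap.neg_apply, ContinuousLinearMap.neg_apply]
      nlinarith
    rw [ContinuousLinearMap.smul_apply, smul_eq_mul, ← div_eq_inv_mul]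
    rw [le_div_iff₀ hψe]
    exact h3
end aux3
theorem stmt3
    (X : Type*) [NormedAddCommGroup X] [Lattice X] [IsOrderedAddMonoid X] [HasSolidNorm X] [NormedSpace ℝ X] [CompleteSpace X]
    -- `e` is a positive order unit inducing the lattice norm of the AM-space `X`
    (e : X) (he : 0 ≤ e)
    (hnorm : ∀ f : X, ‖f‖ = sInf {c : ℝ | -(c • e) ≤ f ∧ f ≤ c • e})
    -- standing assumption on `Q`
    (H : Submodule ℝ X) (hH : IsClosed (H : Set X))
    (Q : Set (StrongDual ℝ X)) (hQne : Q.Nonempty) (hQcl : IsClosed Q) (hQconv : Convex ℝ Q)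
    (hQ : Q = {η : StrongDual ℝ X | ∀ h ∈ H, η h = 0} ∩
      {η : StrongDual ℝ X | dualNonneg X η ∧ η e = 1})
    (f : X) :
    sSup {x : EReal | ∃ η ∈ Q, x = ((η f : ℝ) : EReal)} =
      sInf {x : EReal | ∃ c : ℝ, x = (c : EReal) ∧ ∃ h ∈ H, f ≤ c • e + h} := by
  set S := {x : EReal | ∃ η ∈ Q, x = ((η f : ℝ) : EReal)} with hS
  set I := {x : EReal | ∃ c : ℝ, x = (c : EReal) ∧ ∃ h ∈ H, f ≤ c • e + h} with hI
  -- easy direction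
  have hle : sSup S ≤ sInf I := by
    refine sSup_le ?_
    rintro x ⟨η, hη, rfl⟩
    refine le_sInf ?_
    rintro y ⟨c, rfl, h, hh, hfc⟩
    rw [EReal.coe_le_coe_iff]
    rw [hQ] at hη
    have hηH : ∀ h ∈ H, η h = 0 := hη.1
    have hηpos : ∀ g : X, 0 ≤ g → 0 ≤ η g := hη.2.1
    have hηe : η e = 1 := hη.2.2
    have h0 : 0 ≤ η (c • e + h - f) := hηpos _ (sub_nonneg.2 hfc)
    rw [map_sub, map_add, map_smul, smul_eq_mul, hηe, mul_one, hηH h hh, add_zero] at h0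
    linarith
  refine le_antisymm hle ?_
  by_contra hlt
  push_neg at hlt
  obtain ⟨y, hy1, hy2⟩ := EReal.exists_between_coe_real hlt
  have hyI : ¬ ∃ h ∈ H, f ≤ y • e + h := by
    intro hex
    have : (y : EReal) ∈ I := ⟨y, rfl, hex⟩
    exact absurd (sInf_le this) (not_le.2 hy2)
  obtain ⟨η, hηH, hηpos, hηe, hηf⟩ := aux_sep he hnorm H f y hyI
  have hηQ : η ∈ Q := by
    rw [hQ]
    exact ⟨hηH, hηpos, hηe⟩
  have hmem : ((η f : ℝ) : EReal) ∈ S := ⟨η, hηQ, rfl⟩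
  have : (y : EReal) ≤ sSup S :=
    le_trans (EReal.coe_le_coe_iff.2 hηf) (le_sSup hmem)
  exact absurd (lt_of_le_of_lt this hy1) (lt_irrefl _)
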